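/- Suppose A is a super-amenable Banach algebra. Then A**, with the first Arens product, is Connes-amenable: for every normal dual Banach A**-bimodule B, every weak*-to-weak* continuous derivation from A** into B is inner. -/

import Mathlib

namespace NormedSpace

/-- The topological dual of a normed space, as `NormedSpace.Dual` was defined in older Mathlib. -/
abbrev Dual (𝕜 : Type*) [NontriviallyNormedField 𝕜] (E : Type*) [SeminormedAddCommGroup E]
    [NormedSpace 𝕜 E] : Type _ := E →L[𝕜] 𝕜

end NormedSpace

open ContinuousLinearMap NormedSpace

noncomputable section

section Defs

variable {X Y Z W : Type} [NormedAddCommGroup X] [NormedSpace ℝ X]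
  [NormedAddCommGroup Y] [NormedSpace ℝ Y] [NormedAddCommGroup Z] [NormedSpace ℝ Z]
  [NormedAddCommGroup W] [NormedSpace ℝ W]

/-- The first adjoint `m^*` of a bounded bilinear map `m : X × Y → Z`,
as a map `Z^* × X → Y^*`, `⟨m^*(z',x), y⟩ = ⟨z', m(x,y)⟩`. -/
def adj1 (m : X →L[ℝ] Y →L[ℝ] Z) :
    Dual ℝ Z →L[ℝ] X →L[ℝ] Dual ℝ Y :=
  (((ContinuousLinearMap.compL ℝ X (Y →L[ℝ] Z) (Dual ℝ Y)).flip m).comp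
    (ContinuousLinearMap.compL ℝ Y Z ℝ))

@[simp] lemma adj1_apply (m : X →L[ℝ] Y →L[ℝ] Z) (z' : Dual ℝ Z) (x : X) (y : Y) :
    adj1 m z' x y = z' (m x y) := rfl

/-- The first (left) Arens extension `m^{***} : X^{**} × Y^{**} → Z^{**}` of a
bounded bilinear map `m : X × Y → Z`. -/
def arens (m : X →L[ℝ] Y →L[ℝ] Z) :
    Dual ℝ (Dual ℝ X) →L[ℝ] Dual ℝ (Dual ℝ Y) →L[ℝ] Dual ℝ (Dual ℝ Z) :=
  adj1 (adj1 (adj1 m))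

/-- The adjoint (dual map) of a bounded linear map. -/
def dualMap' (D : X →L[ℝ] Y) : Dual ℝ Y →L[ℝ] Dual ℝ X :=
  (ContinuousLinearMap.compL ℝ X Y ℝ).flip D

@[simp] lemma dualMap'_apply (D : X →L[ℝ] Y) (g : Dual ℝ Y) (x : X) :
    dualMap' D g x = g (D x) := rfl

/-- The second adjoint `D'' : X^{**} → Y^{**}` of a bounded linear map. -/
def bidualMap (D : X →L[ℝ] Y) : Dual ℝ (Dual ℝ X) →L[ℝ] Dual ℝ (Dual ℝ Y) :=
  dualMap' (dualMap' D)

/-- Given an action `t : A × X → X`, the transposed action on the dual `X^*`: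
`(dualAct t) a f = f ∘ (t a)`. -/
def dualAct (t : W →L[ℝ] X →L[ℝ] X) : W →L[ℝ] Dual ℝ X →L[ℝ] Dual ℝ X :=
  ((ContinuousLinearMap.compL ℝ X X ℝ).flip).comp t

@[simp] lemma dualAct_apply (t : W →L[ℝ] X →L[ℝ] X) (a : W) (f : Dual ℝ X) (x : X) :
    dualAct t a f x = f (t a x) := rfl

/-- `D : A → X` is a derivation with respect to the multiplication `mul'` on `A`
and the left action `l` and right action `r` (`r a x` means `x · a`) of `A` on `X`. -/
def IsDer {A' : Type} [NormedAddCommGroup A'] [NormedSpace ℝ A']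
    (mul' : A' →L[ℝ] A' →L[ℝ] A') (l r : A' →L[ℝ] X →L[ℝ] X) (D : A' →L[ℝ] X) : Prop :=
  ∀ a b : A', D (mul' a b) = l a (D b) + r b (D a)

/-- `D : A → X` is an inner derivation: `D a = a·x - x·a` for some `x`. -/
def IsInner {A' : Type} [NormedAddCommGroup A'] [NormedSpace ℝ A']
    (l r : A' →L[ℝ] X →L[ℝ] X) (D : A' →L[ℝ] X) : Prop :=
  ∃ x : X, ∀ a : A', D a = l a x - r a x

/-- The bimodule axioms for actions `l`, `r` of an algebra with multiplication `mul'`. -/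
def IsBimod {A' : Type} [NormedAddCommGroup A'] [NormedSpace ℝ A']
    (mul' : A' →L[ℝ] A' →L[ℝ] A') (l r : A' →L[ℝ] X →L[ℝ] X) : Prop :=
  (∀ a b x, l (mul' a b) x = l a (l b x)) ∧
  (∀ a b x, r (mul' a b) x = r b (r a x)) ∧
  (∀ a b x, l a (r b x) = r b (l a x))

/-- weak*-to-weak* continuity of a map between dual spaces. -/
def WStarCont (f : Dual ℝ X → Dual ℝ Y) : Prop :=
  ∀ y : Y, Continuous fun φ : WeakDual ℝ X => f φ y

end Defs

/-- A packaged Banach `A`-bimodule (used to form iterated duals). -/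
structure ModPk (A : Type) [NormedAddCommGroup A] [NormedSpace ℝ A] : Type 1 where
  X : Type
  [grp : NormedAddCommGroup X]
  [mod : NormedSpace ℝ X]
  l : A →L[ℝ] X →L[ℝ] X
  r : A →L[ℝ] X →L[ℝ] X

attribute [instance] ModPk.grp ModPk.mod

variable {A : Type} [NormedAddCommGroup A] [NormedSpace ℝ A]

/-- The canonical dual of a packaged bimodule. -/
def ModPk.dual (P : ModPk A) : ModPk A :=
  ⟨Dual ℝ P.X, dualAct P.r, dualAct P.l⟩

/-- The `n`-th iterated dual of a packaged bimodule. -/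
def ModPk.iter (P : ModPk A) : ℕ → ModPk A
  | 0 => P
  | n+1 => (P.iter n).dual

/-- A "level": an algebra (given by its bilinear multiplication) together with a bimodule. -/
structure Lvl : Type 1 where
  Alg : Type
  [g1 : NormedAddCommGroup Alg]
  [m1 : NormedSpace ℝ Alg]
  Mod : Type
  [g2 : NormedAddCommGroup Mod]
  [m2 : NormedSpace ℝ Mod]
  mul : Alg →L[ℝ] Alg →L[ℝ] Alg
  l : Alg →L[ℝ] Mod →L[ℝ] Mod
  r : Alg →L[ℝ] Mod →L[ℝ] Mod

attribute [instance] Lvl.g1 Lvl.m1 Lvl.g2 Lvl.m2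

/-- Passing to second duals: `A^{**}` with the first Arens product, acting on `B^{**}`
via the Arens extensions `π_ℓ^{***}` and `π_r^{***}` of the module actions. -/
def Lvl.double (Q : Lvl) : Lvl where
  Alg := Dual ℝ (Dual ℝ Q.Alg)
  Mod := Dual ℝ (Dual ℝ Q.Mod)
  mul := arens Q.mul
  l := arens Q.l
  r := (arens Q.r.flip).flip

/-- Iterated even duals: `Lvl.iter Q n` is the level `(A^{(2n)}, B^{(2n)})`. -/
def Lvl.iter (Q : Lvl) : ℕ → Lvl
  | 0 => Q
  | n+1 => (Q.iter n).double

/-- The canonical embedding `A → A^{(2n)}`. -/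
def Lvl.embA (Q : Lvl) : (n : ℕ) → Q.Alg →L[ℝ] (Q.iter n).Alg
  | 0 => ContinuousLinearMap.id ℝ _
  | n+1 => (inclusionInDoubleDual ℝ ((Q.iter n).Alg)).comp (Q.embA n)

/-- The canonical embedding `B → B^{(2n)}`. -/
def Lvl.embM (Q : Lvl) : (n : ℕ) → Q.Mod →L[ℝ] (Q.iter n).Mod
  | 0 => ContinuousLinearMap.id ℝ _
  | n+1 => (inclusionInDoubleDual ℝ ((Q.iter n).Mod)).comp (Q.embM n)

/-- The left-topological-center condition `Z^ℓ_{A^{(2n+2)}}(B^{(2n+2)}) = B^{(2n+2)}`,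
stated at the double of a level `Q`: for each `b` in the second-dual module, the map
`a ↦ b·a` is weak*-to-weak* continuous. -/
def Lvl.doubleZl (Q : Lvl) : Prop :=
  ∀ b : (Q.double).Mod, WStarCont (X := Dual ℝ Q.Alg) (Y := Dual ℝ Q.Mod)
    (fun a => (Q.double).r a b)

/-- The base level of a Banach algebra `A` with a Banach `A`-bimodule `B`. -/
def lvlOf (A : Type) [NormedRing A] [NormedAlgebra ℝ A]
    (B : Type) [NormedAddCommGroup B] [NormedSpace ℝ B]
    (l r : A →L[ℝ] B →L[ℝ] B) : Lvl :=
  Lvl.mk A B (ContinuousLinearMap.mul ℝ A) l r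
/-- A Banach algebra `A` is super-amenable: every continuous derivation into every
Banach `A`-bimodule is inner. -/
def SuperAmenable (A : Type) [NormedRing A] [NormedAlgebra ℝ A] : Prop :=
  ∀ (X : Type) [NormedAddCommGroup X] [NormedSpace ℝ X] [CompleteSpace X],
  ∀ (l r : A →L[ℝ] X →L[ℝ] X), IsBimod (ContinuousLinearMap.mul ℝ A) l r →
  ∀ D : A →L[ℝ] X, IsDer (ContinuousLinearMap.mul ℝ A) l r D → IsInner l r D

section Aux

instance weakDualLCS (X : Type) [AddCommGroup X] [Module ℝ X] [TopologicalSpace X] :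
    LocallyConvexSpace ℝ (WeakDual ℝ X) :=
  WeakBilin.locallyConvexSpace

/-- Identity map viewing a dual element in the weak-* topology. -/
abbrev toWD {X : Type} [NormedAddCommGroup X] [NormedSpace ℝ X] (F : Dual ℝ X) :
    WeakDual ℝ X := F

section Rep
variable {X : Type} [NormedAddCommGroup X] [NormedSpace ℝ X]

/-- Evaluation at `x` as a linear functional on `WeakDual ℝ X`. -/
def evalWD (x : X) : WeakDual ℝ X →ₗ[ℝ] ℝ where
  toFun F := F x
  map_add' _ _ := rfl
  map_smul' _ _ := rfl

lemma weakdual_rep (φ : WeakDual ℝ X →ₗ[ℝ] ℝ) (hφ : Continuous φ) :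
    ∃ x : X, ∀ F : WeakDual ℝ X, φ F = F x := by
  have hp : WithSeminorms (WeakDual.seminormFamily ℝ X) :=
    WeakDual.withSeminorms ℝ X
  set q : Seminorm ℝ (WeakDual ℝ X) := (normSeminorm ℝ ℝ).comp φ with hqdef
  have hq : Continuous q := continuous_norm.comp hφ
  obtain ⟨s, C, hC, hle⟩ := Seminorm.bound_of_continuous hp q hq
  have hker : ⨅ i : s, LinearMap.ker (evalWD (i : X)) ≤ LinearMap.ker φ := by
    intro F hF
    simp only [Submodule.mem_iInf, LinearMap.mem_ker] at hF ⊢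
    have h0 : Finset.sup s (WeakDual.seminormFamily ℝ X) F = 0 := by
      refine le_antisymm (Seminorm.finset_sup_apply_le le_rfl ?_) (apply_nonneg _ _)
      intro i hi
      have hFi : F i = 0 := hF ⟨i, hi⟩
      simp [WeakDual.seminormFamily_apply, hFi]
    have h2 : q F ≤ (C • Finset.sup s (WeakDual.seminormFamily ℝ X)) F := hle F
    rw [Seminorm.smul_apply, h0, smul_zero, hqdef] at h2
    simp only [Seminorm.comp_apply, coe_normSeminorm] at h2
    simpa using le_antisymm h2 (norm_nonneg _)
  have hspan := mem_span_of_iInf_ker_le_ker (L := fun i : s => evalWD (i : X)) hker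
  obtain ⟨c, hc⟩ := (Submodule.mem_span_range_iff_exists_fun ℝ).1 hspan
  refine ⟨∑ i : s, c i • (i : X), fun F => ?_⟩
  rw [← hc]
  simp only [LinearMap.coe_sum, Finset.sum_apply, LinearMap.smul_apply, smul_eq_mul]
  rw [map_sum]
  refine Finset.sum_congr rfl fun i _ => ?_
  rw [map_smul]
  rfl

end Rep

lemma incl_weakdense (A : Type) [NormedAddCommGroup A] [NormedSpace ℝ A] :
    Dense (Set.range (fun a : A => toWD (inclusionInDoubleDual ℝ A a))) := by
  let T : A →ₗ[ℝ] WeakDual ℝ (Dual ℝ A) :=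
    { toFun := fun a => toWD (inclusionInDoubleDual ℝ A a),
      map_add' := fun a b => map_add (inclusionInDoubleDual ℝ A) a b,
      map_smul' := fun c a => map_smul (inclusionInDoubleDual ℝ A) c a }
  have hM : (LinearMap.range T).topologicalClosure = ⊤ := by
    by_contra hne
    obtain ⟨F, hF⟩ : ∃ F, F ∉ (LinearMap.range T).topologicalClosure := by
      by_contra h; push_neg at h; exact hne (Submodule.eq_top_iff'.2 h)
    obtain ⟨g, u, hgu, huF⟩ :=
      geometric_hahn_banach_closed_point (LinearMap.range T).topologicalClosure.convex
        (LinearMap.range T).isClosed_topologicalClosure hF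
    have hg0 : ∀ m ∈ (LinearMap.range T).topologicalClosure, g m = 0 := by
      intro m hm
      by_contra h
      have h1 := hgu (((|u| + 1) / (g m)) • m)
        (Submodule.smul_mem _ _ hm)
      rw [map_smul, smul_eq_mul, div_mul_cancel₀ _ h] at h1
      linarith [le_abs_self u]
    obtain ⟨x, hx⟩ := weakdual_rep g.toLinearMap g.continuous
    have hx0 : x = 0 := by
      ext a
      have hmem : T a ∈ (LinearMap.range T).topologicalClosure :=
        Submodule.le_topologicalClosure _ (LinearMap.mem_range_self T a)
      have h4 := hg0 (T a) hmem
      rw [show g (T a) = (g.toLinearMap) (T a) from rfl, hx] at h4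
      exact h4
    have hgF : g F = 0 := by
      rw [show g F = (g.toLinearMap) F from rfl, hx, hx0]; simp
    have h0u : (0:ℝ) < u := by simpa using hgu 0 (Submodule.zero_mem _)
    rw [hgF] at huF; linarith
  have h5 := congrArg SetLike.coe hM
  rw [Submodule.topologicalClosure_coe] at h5
  rw [dense_iff_closure_eq,
    show (Set.range fun a : A => toWD (inclusionInDoubleDual ℝ A a))
      = (↑(LinearMap.range T) : Set (WeakDual ℝ (Dual ℝ A))) from (LinearMap.coe_range T).symm]
  exact h5

lemma arens_incl {X Y Z : Type} [NormedAddCommGroup X] [NormedSpace ℝ X]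
    [NormedAddCommGroup Y] [NormedSpace ℝ Y] [NormedAddCommGroup Z] [NormedSpace ℝ Z]
    (m : X →L[ℝ] Y →L[ℝ] Z) (x : X) (y : Y) :
    arens m (inclusionInDoubleDual ℝ X x) (inclusionInDoubleDual ℝ Y y)
      = inclusionInDoubleDual ℝ Z (m x y) := by
  ext f
  rfl

end Aux
/-- **Theorem 2-22 (1).** If `A` is super-amenable then `A**` (with the first Arens
product) is Connes-amenable: for every normal dual Banach `A**`-bimodule, every
weak*-to-weak* continuous derivation is inner. -/
theorem stmt15 (A : Type) [NormedRing A] [NormedAlgebra ℝ A] [CompleteSpace A]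
    (hsa : SuperAmenable A) :
    ∀ (E : Type) [NormedAddCommGroup E] [NormedSpace ℝ E] [CompleteSpace E],
    ∀ (l r : Dual ℝ (Dual ℝ A) →L[ℝ] Dual ℝ E →L[ℝ] Dual ℝ E),
      IsBimod (A' := Dual ℝ (Dual ℝ A)) (X := Dual ℝ E) (arens (ContinuousLinearMap.mul ℝ A)) l r →
      -- the dual bimodule `E* ` is normal
      (∀ b : Dual ℝ E,
        (∀ e : E, Continuous fun F : WeakDual ℝ (Dual ℝ A) => l F b e) ∧
        (∀ e : E, Continuous fun F : WeakDual ℝ (Dual ℝ A) => r F b e)) →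
      ∀ D : Dual ℝ (Dual ℝ A) →L[ℝ] Dual ℝ E,
        IsDer (A' := Dual ℝ (Dual ℝ A)) (X := Dual ℝ E) (arens (ContinuousLinearMap.mul ℝ A)) l r D →
        -- `D` is weak*-to-weak* continuous
        (∀ e : E, Continuous fun F : WeakDual ℝ (Dual ℝ A) => D F e) →
        IsInner (A' := Dual ℝ (Dual ℝ A)) (X := Dual ℝ E) l r D := by
  intro E _ _ _ l r hbm hn D hder hDw
  have hmul : ∀ a b : A, arens (ContinuousLinearMap.mul ℝ A)
      (inclusionInDoubleDual ℝ A a) (inclusionInDoubleDual ℝ A b)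
      = inclusionInDoubleDual ℝ A (a * b) :=
    fun a b => arens_incl (ContinuousLinearMap.mul ℝ A) a b
  set l' : A →L[ℝ] Dual ℝ E →L[ℝ] Dual ℝ E := l.comp (inclusionInDoubleDual ℝ A) with hl'
  set r' : A →L[ℝ] Dual ℝ E →L[ℝ] Dual ℝ E := r.comp (inclusionInDoubleDual ℝ A) with hr'
  have hbm' : IsBimod (ContinuousLinearMap.mul ℝ A) l' r' := by
    refine ⟨fun a b x => ?_, fun a b x => ?_, fun a b x => ?_⟩
    · have h := hbm.1 (inclusionInDoubleDual ℝ A a) (inclusionInDoubleDual ℝ A b) x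
      rw [hmul] at h
      simpa [l', ContinuousLinearMap.comp_apply] using h
    · have h := hbm.2.1 (inclusionInDoubleDual ℝ A a) (inclusionInDoubleDual ℝ A b) x
      rw [hmul] at h
      simpa [r', ContinuousLinearMap.comp_apply] using h
    · simpa [l', r', ContinuousLinearMap.comp_apply] using
        hbm.2.2 (inclusionInDoubleDual ℝ A a) (inclusionInDoubleDual ℝ A b) x
  have hder' : IsDer (ContinuousLinearMap.mul ℝ A) l' r'
      (D.comp (inclusionInDoubleDual ℝ A)) := by
    intro a b
    have h := hder (inclusionInDoubleDual ℝ A a) (inclusionInDoubleDual ℝ A b)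
    rw [hmul] at h
    simpa [l', r', ContinuousLinearMap.comp_apply] using h
  obtain ⟨x, hx⟩ := hsa (Dual ℝ E) l' r' hbm' (D.comp (inclusionInDoubleDual ℝ A)) hder'
  refine ⟨x, fun F => ?_⟩
  ext e
  have hcl : IsClosed {G : WeakDual ℝ (Dual ℝ A) | D G e = l G x e - r G x e} :=
    isClosed_eq (hDw e) (((hn x).1 e).sub ((hn x).2 e))
  have hsub : Set.range (fun a : A => toWD (inclusionInDoubleDual ℝ A a))
      ⊆ {G : WeakDual ℝ (Dual ℝ A) | D G e = l G x e - r G x e} := by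
    rintro _ ⟨a, rfl⟩
    have h6 : D (inclusionInDoubleDual ℝ A a) e = (l' a x - r' a x) e := by
      rw [← hx a]; rfl
    simpa [l', r', ContinuousLinearMap.comp_apply, ContinuousLinearMap.sub_apply] using h6
  have hclosub : closure (Set.range
        (fun a : A => toWD (inclusionInDoubleDual ℝ A a)))
      ⊆ {G : WeakDual ℝ (Dual ℝ A) | D G e = l G x e - r G x e} :=
    closure_minimal hsub hcl
  rw [(incl_weakdense A).closure_eq] at hclosub
  have hF : toWD F ∈ {G : WeakDual ℝ (Dual ℝ A) | D G e = l G x e - r G x e} :=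
    hclosub (Set.mem_univ _)
  simpa [ContinuousLinearMap.sub_apply] using hF
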